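/- The group resistance distance is supermodular: for nonempty subsets X ⊆ Y of the index set and an index v with v ∉ Y and Y ∪ {v} a proper subset of the index set, tr((L_{\X})⁻¹) − tr((L_{\(X∪{v})})⁻¹) ≥ tr((L_{\Y})⁻¹) − tr((L_{\(Y∪{v})})⁻¹). -/

import Mathlib

open Matrix BigOperators Finset Filter Topology

variable {ι : Type*} [Fintype ι] [DecidableEq ι]
variable {κ : Type*} [Fintype κ] [DecidableEq κ]

lemma pow_entry_nonneg (Q : Matrix ι ι ℝ) (hQ : ∀ i j, 0 ≤ Q i j) (k : ℕ) (i j : ι) :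
    0 ≤ (Q ^ k) i j := by
  induction k generalizing i j with
  | zero => simp only [pow_zero, Matrix.one_apply]; split <;> norm_num
  | succ k ih =>
    rw [pow_succ, Matrix.mul_apply]
    exact Finset.sum_nonneg fun l _ => mul_nonneg (ih i l) (hQ l j)

lemma sum_comp_inj_le {f : κ → ι} (hf : Function.Injective f) (g : ι → ℝ)
    (hg : ∀ i, 0 ≤ g i) : ∑ l, g (f l) ≤ ∑ i, g i := by
  rw [← Finset.sum_image (fun x _ y _ h => hf h)]
  exact Finset.sum_le_sum_of_subset_of_nonneg (Finset.subset_univ _)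
    (fun i _ _ => hg i)

lemma pow_submatrix_le (Q : Matrix ι ι ℝ) (hQ : ∀ i j, 0 ≤ Q i j) {f : κ → ι}
    (hf : Function.Injective f) (k : ℕ) (i j : κ) :
    ((Q.submatrix f f) ^ k) i j ≤ (Q ^ k) (f i) (f j) := by
  induction k generalizing i j with
  | zero =>
    simp only [pow_zero, Matrix.one_apply]
    by_cases h : i = j
    · simp [h]
    · rw [if_neg h]
      split <;> norm_num
  | succ k ih =>
    rw [pow_succ, pow_succ, Matrix.mul_apply, Matrix.mul_apply]
    calc ∑ l, ((Q.submatrix f f) ^ k) i l * (Q.submatrix f f) l j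
        ≤ ∑ l, (Q ^ k) (f i) (f l) * Q (f l) (f j) := by
          refine Finset.sum_le_sum fun l _ => ?_
          exact mul_le_mul (ih i l) le_rfl (hQ _ _) (pow_entry_nonneg Q hQ _ _ _)
      _ ≤ ∑ l', (Q ^ k) (f i) l' * Q l' (f j) :=
          sum_comp_inj_le hf (fun l' => (Q ^ k) (f i) l' * Q l' (f j))
            (fun l' => mul_nonneg (pow_entry_nonneg Q hQ _ _ _) (hQ _ _))

set_option linter.unusedSectionVars false

structure Good (Q : Matrix ι ι ℝ) : Prop where
  nonneg : ∀ i j, 0 ≤ Q i j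
  sub : ∀ i, ∑ j, Q i j ≤ 1
  contr : ∀ i, ∃ m, ∑ j, (Q ^ m) i j < 1




lemma rowsum_pow_succ (Q : Matrix ι ι ℝ) (k : ℕ) (i : ι) :
    ∑ j, (Q ^ (k+1)) i j = ∑ l, (Q ^ k) i l * ∑ j, Q l j := by
  rw [pow_succ]
  simp only [Matrix.mul_apply, Finset.mul_sum]
  rw [Finset.sum_comm]

lemma rowsum_pow_antitone (Q : Matrix ι ι ℝ) (hQ : Good Q) (i : ι) :
    Antitone fun k => ∑ j, (Q ^ k) i j := by
  refine antitone_nat_of_succ_le fun k => ?_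
  rw [rowsum_pow_succ]
  calc ∑ l, (Q ^ k) i l * ∑ j, Q l j ≤ ∑ l, (Q ^ k) i l * 1 :=
        Finset.sum_le_sum fun l _ =>
          mul_le_mul_of_nonneg_left (hQ.sub l) (pow_entry_nonneg Q hQ.nonneg k i l)
    _ = ∑ l, (Q ^ k) i l := by simp

lemma rowsum_pow_mul (Q : Matrix ι ι ℝ) (hQ : Good Q) {m : ℕ} {θ : ℝ} (hθ : 0 ≤ θ)
    (h : ∀ l, ∑ j, (Q ^ m) l j ≤ θ) (q : ℕ) (i : ι) :
    ∑ j, (Q ^ (m * q)) i j ≤ θ ^ q := by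
  induction q generalizing i with
  | zero => simp [Matrix.one_apply]
  | succ q ih =>
    have : m * (q + 1) = m * q + m := by ring
    rw [this, pow_add]
    rw [show (Q ^ (m*q) * Q ^ m) = Q ^ (m*q) * Q ^ m from rfl]
    have expand : ∑ j, (Q ^ (m*q) * Q ^ m) i j = ∑ l, (Q ^ (m*q)) i l * ∑ j, (Q ^ m) l j := by
      simp only [Matrix.mul_apply, Finset.mul_sum]
      rw [Finset.sum_comm]
    rw [expand]
    calc ∑ l, (Q ^ (m*q)) i l * ∑ j, (Q ^ m) l j
        ≤ ∑ l, (Q ^ (m*q)) i l * θ := Finset.sum_le_sum fun l _ =>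
          mul_le_mul_of_nonneg_left (h l) (pow_entry_nonneg Q hQ.nonneg _ i l)
      _ = (∑ l, (Q ^ (m*q)) i l) * θ := by rw [← Finset.sum_mul]
      _ ≤ θ ^ q * θ := mul_le_mul_of_nonneg_right (ih i) hθ
      _ = θ ^ (q+1) := by ring

lemma good_uniform (Q : Matrix ι ι ℝ) (hQ : Good Q) :
    ∃ m : ℕ, 1 ≤ m ∧ ∃ θ : ℝ, 0 ≤ θ ∧ θ < 1 ∧ ∀ i, ∑ j, (Q ^ m) i j ≤ θ := by
  by_cases hι : Nonempty ι
  · choose mf hmf using hQ.contr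
    set m := 1 + Finset.univ.sup mf with hm
    refine ⟨m, le_add_of_nonneg_right (Nat.zero_le _), ?_⟩
    have hrs : ∀ i, ∑ j, (Q ^ m) i j < 1 := fun i =>
      lt_of_le_of_lt (rowsum_pow_antitone Q hQ i
        (le_trans (Finset.le_sup (Finset.mem_univ i)) (Nat.le_add_left _ 1))) (hmf i)
    obtain ⟨i₀⟩ := hι
    refine ⟨Finset.univ.sup' ⟨i₀, Finset.mem_univ i₀⟩ (fun i => ∑ j, (Q ^ m) i j), ?_, ?_, ?_⟩
    · exact le_trans (Finset.sum_nonneg fun j _ => pow_entry_nonneg Q hQ.nonneg m i₀ j)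
        (Finset.le_sup' (fun i => ∑ j, (Q ^ m) i j) (Finset.mem_univ i₀))
    · exact (Finset.sup'_lt_iff _).mpr fun i _ => hrs i
    · exact fun i => Finset.le_sup' (fun i => ∑ j, (Q ^ m) i j) (Finset.mem_univ i)
  · exact ⟨1, le_rfl, 0, le_rfl, by norm_num, fun i => absurd ⟨i⟩ hι⟩

lemma good_rowsum_tendsto (Q : Matrix ι ι ℝ) (hQ : Good Q) (i : ι) :
    Tendsto (fun k => ∑ j, (Q ^ k) i j) atTop (𝓝 0) := by
  obtain ⟨m, hm1, θ, hθ0, hθ1, hθ⟩ := good_uniform Q hQ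
  have hdiv : Tendsto (fun k : ℕ => k / m) atTop atTop := by
    refine tendsto_atTop_atTop.mpr fun b => ⟨b * m, fun k hk => ?_⟩
    exact (Nat.le_div_iff_mul_le hm1).mpr hk
  have hpow : Tendsto (fun k : ℕ => θ ^ (k / m)) atTop (𝓝 0) :=
    (tendsto_pow_atTop_nhds_zero_of_lt_one hθ0 hθ1).comp hdiv
  refine squeeze_zero (fun k => Finset.sum_nonneg fun j _ => pow_entry_nonneg Q hQ.nonneg k i j)
    (fun k => ?_) hpow
  calc ∑ j, (Q ^ k) i j ≤ ∑ j, (Q ^ (m * (k / m))) i j :=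
        rowsum_pow_antitone Q hQ i (Nat.mul_div_le k m)
    _ ≤ θ ^ (k / m) := rowsum_pow_mul Q hQ hθ0 hθ (k/m) i

lemma good_entry_tendsto (Q : Matrix ι ι ℝ) (hQ : Good Q) (i j : ι) :
    Tendsto (fun k => (Q ^ k) i j) atTop (𝓝 0) :=
  squeeze_zero (fun k => pow_entry_nonneg Q hQ.nonneg k i j)
    (fun k => Finset.single_le_sum (f := fun j => (Q ^ k) i j)
      (fun l _ => pow_entry_nonneg Q hQ.nonneg k i l) (Finset.mem_univ j))
    (good_rowsum_tendsto Q hQ i)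

lemma good_isUnit (Q : Matrix ι ι ℝ) (hQ : Good Q) : IsUnit (1 - Q) := by
  rw [← Matrix.mulVec_injective_iff_isUnit]
  intro x y hxy
  have key : ∀ z : ι → ℝ, (1 - Q) *ᵥ z = 0 → z = 0 := by
    intro z hz
    have hz' : ∀ k : ℕ, (Q ^ k) *ᵥ z = z := by
      intro k
      induction k with
      | zero => simp
      | succ k ih =>
        have h1 : z - Q *ᵥ z = 0 := by
          simpa [Matrix.sub_mulVec] using hz
        have h1' : Q *ᵥ z = z := (sub_eq_zero.mp h1).symm
        rw [pow_succ', ← Matrix.mulVec_mulVec, ih, h1']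
    funext i
    have hb : ∀ k, |z i| ≤ (∑ j, (Q ^ k) i j) * ∑ j, |z j| := by
      intro k
      have := hz' k
      have hzi : z i = ∑ j, (Q ^ k) i j * z j := by
        rw [← congrFun this i]; rfl
      rw [hzi]
      calc |∑ j, (Q ^ k) i j * z j| ≤ ∑ j, |(Q ^ k) i j * z j| := Finset.abs_sum_le_sum_abs _ _
        _ = ∑ j, (Q ^ k) i j * |z j| := by
            refine Finset.sum_congr rfl fun j _ => ?_
            rw [abs_mul, abs_of_nonneg (pow_entry_nonneg Q hQ.nonneg k i j)]
        _ ≤ ∑ j, (∑ j', (Q ^ k) i j') * |z j| := Finset.sum_le_sum fun j _ =>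
            mul_le_mul_of_nonneg_right (Finset.single_le_sum
              (fun l _ => pow_entry_nonneg Q hQ.nonneg k i l) (Finset.mem_univ j)) (abs_nonneg _)
        _ = (∑ j, (Q ^ k) i j) * ∑ j, |z j| := by rw [← Finset.mul_sum]
    have : |z i| ≤ 0 := by
      refine le_of_tendsto_of_tendsto'
        (tendsto_const_nhds : Tendsto (fun _ : ℕ => |z i|) atTop (𝓝 |z i|)) ?_ hb
      simpa using (good_rowsum_tendsto Q hQ i).mul_const (∑ j, |z j|)
    exact abs_eq_zero.mp (le_antisymm this (abs_nonneg _))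
  have := key (x - y) (by rw [Matrix.mulVec_sub, hxy, sub_self])
  exact sub_eq_zero.mp this

lemma good_inv_tendsto (Q : Matrix ι ι ℝ) (hQ : Good Q) (i j : ι) :
    Tendsto (fun K => ∑ k ∈ Finset.range K, (Q ^ k) i j) atTop (𝓝 ((1 - Q)⁻¹ i j)) := by
  have hdet : IsUnit (1 - Q).det := (Matrix.isUnit_iff_isUnit_det _).mp (good_isUnit Q hQ)
  set N := (1 - Q)⁻¹ with hN
  have hright : (1 - Q) * N = 1 := Matrix.mul_nonsing_inv _ hdet
  have key : ∀ K, (∑ k ∈ Finset.range K, Q ^ k) = N - Q ^ K * N := by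
    intro K
    have h1 : (∑ k ∈ Finset.range K, Q ^ k) * (Q - 1) = Q ^ K - 1 := geom_sum_mul Q K
    have h2 : (∑ k ∈ Finset.range K, Q ^ k) * (1 - Q) = 1 - Q ^ K := by
      rw [← neg_sub Q 1, mul_neg, h1, neg_sub]
    calc (∑ k ∈ Finset.range K, Q ^ k)
        = (∑ k ∈ Finset.range K, Q ^ k) * ((1 - Q) * N) := by rw [hright, mul_one]
      _ = ((∑ k ∈ Finset.range K, Q ^ k) * (1 - Q)) * N := by rw [mul_assoc]
      _ = (1 - Q ^ K) * N := by rw [h2]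
      _ = N - Q ^ K * N := by rw [sub_mul, one_mul]
  have hK : ∀ K, ∑ k ∈ Finset.range K, (Q ^ k) i j = N i j - ∑ l, (Q ^ K) i l * N l j := by
    intro K
    have h := congrFun (congrFun (congrArg (fun M : Matrix ι ι ℝ => (M : Matrix ι ι ℝ)) (key K)) i) j
    simpa [Matrix.sum_apply, Matrix.sub_apply, Matrix.mul_apply] using h
  have h0 : Tendsto (fun K => ∑ l, (Q ^ K) i l * N l j) atTop (𝓝 0) := by
    have h := tendsto_finset_sum (Finset.univ : Finset ι)
      (fun l _ => (good_entry_tendsto Q hQ i l).mul_const (N l j))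
    simpa using h
  have h : Tendsto (fun K => N i j - ∑ l, (Q ^ K) i l * N l j) atTop (𝓝 (N i j - 0)) :=
    Tendsto.sub tendsto_const_nhds h0
  rw [sub_zero] at h
  exact Tendsto.congr (fun K => (hK K).symm) h

lemma good_inv_nonneg (Q : Matrix ι ι ℝ) (hQ : Good Q) (i j : ι) : 0 ≤ (1 - Q)⁻¹ i j :=
  ge_of_tendsto' (good_inv_tendsto Q hQ i j)
    (fun K => Finset.sum_nonneg fun k _ => pow_entry_nonneg Q hQ.nonneg k i j)

lemma good_inv_diag_ge_one (Q : Matrix ι ι ℝ) (hQ : Good Q) (i : ι) :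
    1 ≤ (1 - Q)⁻¹ i i := by
  refine ge_of_tendsto (good_inv_tendsto Q hQ i i) ?_
  filter_upwards [eventually_ge_atTop 1] with K hK
  calc (1:ℝ) = (Q ^ 0) i i := by simp [Matrix.one_apply]
    _ ≤ ∑ k ∈ Finset.range K, (Q ^ k) i i :=
      Finset.single_le_sum (f := fun k => (Q ^ k) i i)
        (fun k _ => pow_entry_nonneg Q hQ.nonneg k i i) (Finset.mem_range.mpr hK)

lemma good_submatrix (Q : Matrix ι ι ℝ) (hQ : Good Q) {f : κ → ι}
    (hf : Function.Injective f) : Good (Q.submatrix f f) where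
  nonneg := fun i j => hQ.nonneg _ _
  sub := fun i => by
    calc ∑ j, Q.submatrix f f i j = ∑ j, Q (f i) (f j) := rfl
      _ ≤ ∑ j', Q (f i) j' := sum_comp_inj_le hf (fun j' => Q (f i) j') (fun j' => hQ.nonneg _ _)
      _ ≤ 1 := hQ.sub _
  contr := fun i => by
    obtain ⟨m, hm⟩ := hQ.contr (f i)
    refine ⟨m, lt_of_le_of_lt ?_ hm⟩
    calc ∑ j, ((Q.submatrix f f) ^ m) i j ≤ ∑ j, (Q ^ m) (f i) (f j) :=
          Finset.sum_le_sum fun j _ => pow_submatrix_le Q hQ.nonneg hf m i j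
      _ ≤ ∑ j', (Q ^ m) (f i) j' := sum_comp_inj_le hf (fun j' => (Q ^ m) (f i) j')
          (fun j' => pow_entry_nonneg Q hQ.nonneg m _ _)

lemma good_inv_submatrix_le (Q : Matrix ι ι ℝ) (hQ : Good Q) {f : κ → ι}
    (hf : Function.Injective f) (i j : κ) :
    (1 - Q.submatrix f f)⁻¹ i j ≤ (1 - Q)⁻¹ (f i) (f j) := by
  refine le_of_tendsto_of_tendsto'
    (good_inv_tendsto _ (good_submatrix Q hQ hf) i j)
    (good_inv_tendsto Q hQ (f i) (f j)) (fun K => ?_)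
  exact Finset.sum_le_sum fun k _ => pow_submatrix_le Q hQ.nonneg hf k i j

lemma good_inv_mulVec_submatrix_le (Q : Matrix ι ι ℝ) (hQ : Good Q) {f : κ → ι}
    (hf : Function.Injective f) (c : ι → ℝ) (hc : ∀ i, 0 ≤ c i) (i : κ) :
    ((1 - Q.submatrix f f)⁻¹ *ᵥ (fun l => c (f l))) i ≤ ((1 - Q)⁻¹ *ᵥ c) (f i) := by
  show ∑ l, (1 - Q.submatrix f f)⁻¹ i l * c (f l) ≤ ∑ l', (1 - Q)⁻¹ (f i) l' * c l'
  calc ∑ l, (1 - Q.submatrix f f)⁻¹ i l * c (f l)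
      ≤ ∑ l, (1 - Q)⁻¹ (f i) (f l) * c (f l) := Finset.sum_le_sum fun l _ =>
        mul_le_mul_of_nonneg_right (good_inv_submatrix_le Q hQ hf i l) (hc _)
    _ ≤ ∑ l', (1 - Q)⁻¹ (f i) l' * c l' := sum_comp_inj_le hf
        (fun l' => (1 - Q)⁻¹ (f i) l' * c l')
        (fun l' => mul_nonneg (good_inv_nonneg Q hQ _ _) (hc _))


lemma sum_compl_eq {f : κ → ι} (hf : Function.Injective f) {v : ι}
    (hrange : ∀ i : ι, i ≠ v ↔ ∃ k, f k = i) (g : ι → ℝ) :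
    ∑ l, g l = g v + ∑ k, g (f k) := by
  have himg : Finset.univ.image f = Finset.univ.erase v := by
    ext i
    simp only [Finset.mem_image, Finset.mem_erase, Finset.mem_univ, and_true, true_and]
    constructor
    · rintro ⟨k, _, rfl⟩
      exact (hrange (f k)).mpr ⟨k, rfl⟩
    · intro hi
      obtain ⟨k, hk⟩ := (hrange i).mp hi
      exact ⟨k, hk⟩
  rw [← Finset.sum_image (fun x _ y _ h => hf h), himg,
    Finset.add_sum_erase _ g (Finset.mem_univ v)]

lemma fk_ne_v {f : κ → ι} {v : ι} (hrange : ∀ i : ι, i ≠ v ↔ ∃ k, f k = i) (k : κ) :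
    f k ≠ v := (hrange (f k)).mpr ⟨k, rfl⟩

lemma inv_submatrix_compl (A M : Matrix ι ι ℝ) (h2 : M * A = 1)
    (v : ι) (hv : M v v ≠ 0) {f : κ → ι} (hf : Function.Injective f)
    (hrange : ∀ i : ι, i ≠ v ↔ ∃ k, f k = i) :
    (A.submatrix f f)⁻¹ =
      Matrix.of (fun k k' => M (f k) (f k') - M (f k) v * M v (f k') / M v v) := by
  set C : Matrix κ κ ℝ :=
    Matrix.of (fun k k' => M (f k) (f k') - M (f k) v * M v (f k') / M v v) with hC
  refine Matrix.inv_eq_left_inv ?_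
  ext k k'
  rw [Matrix.mul_apply, Matrix.one_apply]
  have hg : ∀ l, C k l * (A.submatrix f f) l k' =
      (fun l' => (M (f k) l' - M (f k) v * M v l' / M v v) * A l' (f k')) (f l) := fun l => rfl
  calc ∑ l, C k l * (A.submatrix f f) l k'
      = ∑ l, (fun l' => (M (f k) l' - M (f k) v * M v l' / M v v) * A l' (f k')) (f l) :=
        Finset.sum_congr rfl fun l _ => hg l
    _ = (∑ l', (M (f k) l' - M (f k) v * M v l' / M v v) * A l' (f k'))
        - (M (f k) v - M (f k) v * M v v / M v v) * A v (f k') := by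
        rw [sum_compl_eq hf hrange (fun l' => (M (f k) l' - M (f k) v * M v l' / M v v) * A l' (f k'))]
        ring
    _ = (if k = k' then 1 else 0) := by
        have e1 : ∑ l', (M (f k) l' - M (f k) v * M v l' / M v v) * A l' (f k')
            = (M * A) (f k) (f k') - (M (f k) v / M v v) * (M * A) v (f k') := by
          rw [Matrix.mul_apply, Matrix.mul_apply, Finset.mul_sum, ← Finset.sum_sub_distrib]
          refine Finset.sum_congr rfl fun l' _ => by ring
        have e2 : M (f k) v - M (f k) v * M v v / M v v = 0 := by
          field_simp
          ring
        rw [e1, e2, h2, zero_mul, sub_zero, Matrix.one_apply, Matrix.one_apply]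
        rw [if_neg (fun hh : v = f k' => (fk_ne_v hrange k') hh.symm), mul_zero, sub_zero]
        by_cases h : k = k'
        · rw [if_pos h, if_pos (congrArg f h)]
        · rw [if_neg h, if_neg (fun hh => h (hf hh))]

lemma trace_delete (A M : Matrix ι ι ℝ) (h2 : M * A = 1)
    (v : ι) (hv : M v v ≠ 0) {f : κ → ι} (hf : Function.Injective f)
    (hrange : ∀ i : ι, i ≠ v ↔ ∃ k, f k = i) :
    (A.submatrix f f)⁻¹.trace = M.trace - (∑ i, M i v * M v i) / M v v := by
  rw [inv_submatrix_compl A M h2 v hv hf hrange]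
  have S1 := sum_compl_eq hf hrange (fun l => M l l)
  have S2 := sum_compl_eq hf hrange (fun l => M l v * M v l)
  simp only [Matrix.trace, Matrix.diag, Matrix.of_apply]
  rw [Finset.sum_sub_distrib, ← Finset.sum_div, S1, S2]
  field_simp
  ring

lemma inv_col_eq (Q : Matrix ι ι ℝ) (hQ : Good Q) (v : ι) {f : κ → ι}
    (hf : Function.Injective f) (hrange : ∀ i : ι, i ≠ v ↔ ∃ k, f k = i) (k : κ) :
    (1 - Q)⁻¹ (f k) v =
      ((1 - Q.submatrix f f)⁻¹ *ᵥ (fun l => Q (f l) v)) k * (1 - Q)⁻¹ v v := by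
  set N := (1 - Q)⁻¹ with hN
  have hdet : IsUnit (1 - Q).det := (Matrix.isUnit_iff_isUnit_det _).mp (good_isUnit Q hQ)
  have hleft : (1 - Q) * N = 1 := Matrix.mul_nonsing_inv _ hdet
  have hQ' : Good (Q.submatrix f f) := good_submatrix Q hQ hf
  have hdet' : IsUnit (1 - Q.submatrix f f).det :=
    (Matrix.isUnit_iff_isUnit_det _).mp (good_isUnit _ hQ')
  have hNl' : (1 - Q.submatrix f f)⁻¹ * (1 - Q.submatrix f f) = 1 :=
    Matrix.nonsing_inv_mul _ hdet'
  set u : κ → ℝ := fun k => N (f k) v with hu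
  have step1 : ((1 - Q.submatrix f f) *ᵥ u) = fun k => Q (f k) v * N v v := by
    funext k
    have hrow : ∑ l, (1 - Q) (f k) l * N l v = 0 := by
      have h := congrFun (congrFun hleft (f k)) v
      rw [Matrix.mul_apply] at h
      rw [h, Matrix.one_apply, if_neg (fk_ne_v hrange k)]
    have hexp : ∑ l, (1 - Q) (f k) l * N l v = N (f k) v - ∑ l, Q (f k) l * N l v := by
      simp only [Matrix.sub_apply, Matrix.one_apply, sub_mul]
      rw [Finset.sum_sub_distrib]
      congr 1
      simp
    have hsplit := sum_compl_eq hf hrange (fun l => Q (f k) l * N l v)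
    have hmv : ((1 - Q.submatrix f f) *ᵥ u) k = u k - ∑ l, Q (f k) (f l) * u l := by
      simp only [Matrix.mulVec, dotProduct, Matrix.sub_apply, Matrix.one_apply,
        Matrix.submatrix_apply, sub_mul]
      rw [Finset.sum_sub_distrib]
      congr 1
      simp
    rw [hmv]
    rw [hexp] at hrow
    show N (f k) v - ∑ l, Q (f k) (f l) * N (f l) v = Q (f k) v * N v v
    linarith [hsplit, hrow]
  have step2 : u = (1 - Q.submatrix f f)⁻¹ *ᵥ ((1 - Q.submatrix f f) *ᵥ u) := by
    rw [Matrix.mulVec_mulVec, hNl', Matrix.one_mulVec]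
  have : u k = ((1 - Q.submatrix f f)⁻¹ *ᵥ (fun l => Q (f l) v * N v v)) k := by
    conv_lhs => rw [step2, step1]
  rw [show N (f k) v = u k from rfl, this]
  rw [Matrix.mulVec, Matrix.mulVec]
  simp only [dotProduct]
  rw [Finset.sum_mul]
  exact Finset.sum_congr rfl fun l _ => by ring

lemma rowsum_pow_one (Q : Matrix ι ι ℝ) (h : ∀ i, ∑ j, Q i j = 1) (k : ℕ) (i : ι) :
    ∑ j, (Q ^ k) i j = 1 := by
  induction k generalizing i with
  | zero => simp [Matrix.one_apply]
  | succ k ih =>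
    rw [rowsum_pow_succ]
    simp only [h, mul_one]
    exact ih i

lemma good_kept {n : ℕ} (P : Matrix (Fin n) (Fin n) ℝ) (hP0 : ∀ i j, 0 ≤ P i j)
    (hProw : ∀ i, ∑ j, P i j = 1)
    (hPirr : ∀ i j, ∃ m : ℕ, 1 ≤ m ∧ 0 < (P ^ m) i j)
    (S : Finset (Fin n)) {z : Fin n} (hz : z ∈ S) :
    Good (P.submatrix (Subtype.val : {i : Fin n // i ∉ S} → Fin n) Subtype.val) where
  nonneg i j := hP0 _ _
  sub i := le_trans
    (sum_comp_inj_le Subtype.val_injective (fun j => P i.val j) (fun j => hP0 _ _))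
    (le_of_eq (hProw _))
  contr i := by
    obtain ⟨m, _, hmpos⟩ := hPirr i.val z
    refine ⟨m, ?_⟩
    have h1 : ∑ j : {i : Fin n // i ∉ S}, ((P.submatrix Subtype.val Subtype.val) ^ m) i j
        ≤ ∑ j : {i : Fin n // i ∉ S}, (P ^ m) i.val j.val :=
      Finset.sum_le_sum fun j _ => pow_submatrix_le P hP0 Subtype.val_injective m i j
    have h2 : ∑ j : {i : Fin n // i ∉ S}, (P ^ m) i.val j.val
        ≤ ∑ j ∈ Finset.univ.erase z, (P ^ m) i.val j := by
      have himg : ∑ j ∈ Finset.univ.image (Subtype.val : {i : Fin n // i ∉ S} → Fin n),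
          (P ^ m) i.val j = ∑ j : {i : Fin n // i ∉ S}, (P ^ m) i.val j.val :=
        Finset.sum_image (fun x _ y _ h => Subtype.val_injective h)
      rw [← himg]
      refine Finset.sum_le_sum_of_subset_of_nonneg ?_
        (fun j _ _ => pow_entry_nonneg P hP0 m i.val j)
      intro j hj
      simp only [Finset.mem_image, Finset.mem_univ, true_and] at hj
      obtain ⟨k, hk⟩ := hj
      refine Finset.mem_erase.mpr ⟨?_, Finset.mem_univ j⟩
      intro hjz
      exact k.2 (by rw [hk, hjz]; exact hz)
    have h3 : ∑ j ∈ Finset.univ.erase z, (P ^ m) i.val j = 1 - (P ^ m) i.val z := by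
      rw [Finset.sum_erase_eq_sub (Finset.mem_univ z),
        rowsum_pow_one P hProw m i.val]
    linarith

lemma Lsub_inv {n : ℕ} (P : Matrix (Fin n) (Fin n) ℝ) (pv : Fin n → ℝ)
    (hpv : ∀ i, pv i ≠ 0) (d : ℝ) (hd : d ≠ 0)
    {τ : Type*} [Fintype τ] [DecidableEq τ] (e : τ → Fin n) (he : Function.Injective e)
    (hdet : IsUnit (1 - P.submatrix e e).det) :
    (d • (Matrix.diagonal pv * (1 - P))).submatrix e e *
      (d⁻¹ • ((1 - P.submatrix e e)⁻¹ * Matrix.diagonal (fun i => (pv (e i))⁻¹))) = 1 ∧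
    ((d • (Matrix.diagonal pv * (1 - P))).submatrix e e)⁻¹ =
      d⁻¹ • ((1 - P.submatrix e e)⁻¹ * Matrix.diagonal (fun i => (pv (e i))⁻¹)) := by
  have hsub : (d • (Matrix.diagonal pv * (1 - P))).submatrix e e
      = d • (Matrix.diagonal (fun i => pv (e i)) * (1 - P.submatrix e e)) := by
    ext i j
    rw [Matrix.submatrix_apply, Matrix.smul_apply, Matrix.smul_apply,
      Matrix.diagonal_mul, Matrix.diagonal_mul]
    simp only [Matrix.sub_apply, Matrix.one_apply, Matrix.submatrix_apply, smul_eq_mul]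
    congr 2
    by_cases h : i = j
    · rw [if_pos h, if_pos (congrArg e h)]
    · rw [if_neg h, if_neg (fun hh => h (he hh))]
  have hNinv : (1 - P.submatrix e e) * (1 - P.submatrix e e)⁻¹ = 1 :=
    Matrix.mul_nonsing_inv _ hdet
  have hmain : (d • (Matrix.diagonal pv * (1 - P))).submatrix e e *
      (d⁻¹ • ((1 - P.submatrix e e)⁻¹ * Matrix.diagonal (fun i => (pv (e i))⁻¹))) = 1 := by
    rw [hsub, Matrix.smul_mul, Matrix.mul_smul, smul_smul, mul_inv_cancel₀ hd, one_smul]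
    rw [mul_assoc, ← mul_assoc (1 - P.submatrix e e), hNinv, one_mul,
      Matrix.diagonal_mul_diagonal]
    rw [show (fun i => pv (e i) * (pv (e i))⁻¹) = fun _ => (1:ℝ) from
      funext fun i => mul_inv_cancel₀ (hpv (e i))]
    exact Matrix.diagonal_one
  exact ⟨hmain, Matrix.inv_eq_right_inv hmain⟩


/-- Supermodularity of the group resistance distance: for nonempty
`X ⊆ Y`, `v ∉ Y` and `Y ∪ {v}` proper,
`tr((L_{\X})⁻¹) − tr((L_{\(X∪{v})})⁻¹) ≥ tr((L_{\Y})⁻¹) − tr((L_{\(Y∪{v})})⁻¹)`. -/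
theorem directed_group_resistance_supermodular
    {n : ℕ} (hn : 2 ≤ n)
    (P : Matrix (Fin n) (Fin n) ℝ)
    (hP0 : ∀ i j, 0 ≤ P i j)
    (hProw : ∀ i, ∑ j, P i j = 1)
    (hPirr : ∀ i j, ∃ m : ℕ, 1 ≤ m ∧ 0 < (P ^ m) i j)
    (pv : Fin n → ℝ) (hpv0 : ∀ i, 0 < pv i) (hpvsum : ∑ i, pv i = 1)
    (hstat : pv ᵥ* P = pv)
    (d : ℝ) (hd : 0 < d)
    (L : Matrix (Fin n) (Fin n) ℝ)
    (hL : L = d • (Matrix.diagonal pv * (1 - P)))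
    (X Y : Finset (Fin n)) (hXnonempty : X.Nonempty) (hXY : X ⊆ Y)
    (v : Fin n) (hv : v ∉ Y) (hYv : insert v Y ≠ Finset.univ)
    (LX : Matrix {i : Fin n // i ∉ X} {i : Fin n // i ∉ X} ℝ)
    (hLX : LX = L.submatrix Subtype.val Subtype.val)
    (LXv : Matrix {i : Fin n // i ∉ insert v X} {i : Fin n // i ∉ insert v X} ℝ)
    (hLXv : LXv = L.submatrix Subtype.val Subtype.val)
    (LY : Matrix {i : Fin n // i ∉ Y} {i : Fin n // i ∉ Y} ℝ)
    (hLY : LY = L.submatrix Subtype.val Subtype.val)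
    (LYv : Matrix {i : Fin n // i ∉ insert v Y} {i : Fin n // i ∉ insert v Y} ℝ)
    (hLYv : LYv = L.submatrix Subtype.val Subtype.val) :
    (LY⁻¹).trace - (LYv⁻¹).trace ≤ (LX⁻¹).trace - (LXv⁻¹).trace := by
  subst hL hLX hLXv hLY hLYv
  obtain ⟨z, hzX⟩ := hXnonempty
  have hvX : v ∉ X := fun h => hv (hXY h)
  have hpv' : ∀ i, pv i ≠ 0 := fun i => (hpv0 i).ne'
  -- index maps
  let fYX : {i : Fin n // i ∉ Y} → {i : Fin n // i ∉ X} := fun i => ⟨i.1, fun h => i.2 (hXY h)⟩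
  let fXvX : {i : Fin n // i ∉ insert v X} → {i : Fin n // i ∉ X} :=
    fun i => ⟨i.1, fun h => i.2 (Finset.mem_insert_of_mem h)⟩
  let fYvY : {i : Fin n // i ∉ insert v Y} → {i : Fin n // i ∉ Y} :=
    fun i => ⟨i.1, fun h => i.2 (Finset.mem_insert_of_mem h)⟩
  let fYvXv : {i : Fin n // i ∉ insert v Y} → {i : Fin n // i ∉ insert v X} :=
    fun i => ⟨i.1, fun h => i.2 (by
      rcases Finset.mem_insert.mp h with h1 | h1
      · rw [h1]; exact Finset.mem_insert_self v Y
      · exact Finset.mem_insert_of_mem (hXY h1))⟩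
  have hfYX : Function.Injective fYX := by
    intro a b h
    have h2 := congrArg Subtype.val h
    exact Subtype.ext h2
  have hfXvX : Function.Injective fXvX := by
    intro a b h
    have h2 := congrArg Subtype.val h
    exact Subtype.ext h2
  have hfYvY : Function.Injective fYvY := by
    intro a b h
    have h2 := congrArg Subtype.val h
    exact Subtype.ext h2
  have hfYvXv : Function.Injective fYvXv := by
    intro a b h
    have h2 := congrArg Subtype.val h
    exact Subtype.ext h2
  let vX : {i : Fin n // i ∉ X} := ⟨v, hvX⟩
  let vY : {i : Fin n // i ∉ Y} := ⟨v, hv⟩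
  -- goodness
  have hGX : Good (P.submatrix (Subtype.val : {i : Fin n // i ∉ X} → Fin n) Subtype.val) :=
    good_kept P hP0 hProw hPirr X hzX
  have hGY : Good (P.submatrix (Subtype.val : {i : Fin n // i ∉ Y} → Fin n) Subtype.val) :=
    good_kept P hP0 hProw hPirr Y (hXY hzX)
  have hGXv : Good (P.submatrix (Subtype.val : {i : Fin n // i ∉ insert v X} → Fin n) Subtype.val) :=
    good_kept P hP0 hProw hPirr (insert v X) (Finset.mem_insert_of_mem hzX)
  set QX := P.submatrix (Subtype.val : {i : Fin n // i ∉ X} → Fin n) Subtype.val with hQX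
  set QY := P.submatrix (Subtype.val : {i : Fin n // i ∉ Y} → Fin n) Subtype.val with hQY
  set QXv := P.submatrix (Subtype.val : {i : Fin n // i ∉ insert v X} → Fin n) Subtype.val with hQXv
  set NX := (1 - QX)⁻¹ with hNX
  set NY := (1 - QY)⁻¹ with hNY
  have hdetX : IsUnit (1 - QX).det := (Matrix.isUnit_iff_isUnit_det _).mp (good_isUnit _ hGX)
  have hdetY : IsUnit (1 - QY).det := (Matrix.isUnit_iff_isUnit_det _).mp (good_isUnit _ hGY)
  -- inverse formulas
  have hIX := Lsub_inv P pv hpv' d hd.ne' (Subtype.val : {i : Fin n // i ∉ X} → Fin n)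
    Subtype.val_injective hdetX
  have hIY := Lsub_inv P pv hpv' d hd.ne' (Subtype.val : {i : Fin n // i ∉ Y} → Fin n)
    Subtype.val_injective hdetY
  set RX := d⁻¹ • (NX * Matrix.diagonal (fun i : {i : Fin n // i ∉ X} => (pv i.val)⁻¹)) with hRX
  set RY := d⁻¹ • (NY * Matrix.diagonal (fun i : {i : Fin n // i ∉ Y} => (pv i.val)⁻¹)) with hRY
  set A := d • (Matrix.diagonal pv * (1 - P)) with hA
  have hRXe : ∀ i j, RX i j = d⁻¹ * (NX i j * (pv j.val)⁻¹) := by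
    intro i j; rw [hRX]; simp [Matrix.smul_apply, Matrix.mul_diagonal]
  have hRYe : ∀ i j, RY i j = d⁻¹ * (NY i j * (pv j.val)⁻¹) := by
    intro i j; rw [hRY]; simp [Matrix.smul_apply, Matrix.mul_diagonal]
  have hNXvv : 1 ≤ NX vX vX := good_inv_diag_ge_one _ hGX vX
  have hNYvv : 1 ≤ NY vY vY := good_inv_diag_ge_one _ hGY vY
  have hNXvv0 : NX vX vX ≠ 0 := by linarith
  have hNYvv0 : NY vY vY ≠ 0 := by linarith
  have hMX2 : RX * (A.submatrix Subtype.val Subtype.val) = 1 :=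
    mul_eq_one_comm.mp hIX.1
  have hMY2 : RY * (A.submatrix Subtype.val Subtype.val) = 1 :=
    mul_eq_one_comm.mp hIY.1
  have hRXvv0 : RX vX vX ≠ 0 := by
    rw [hRXe]
    have h1 : 0 < NX vX vX := by linarith
    have h2 := hpv0 v
    have h3 : (0:ℝ) < d⁻¹ := by positivity
    show d⁻¹ * (NX vX vX * (pv (vX.val))⁻¹) ≠ 0
    have h4 := hpv0 vX.val
    positivity
  have hRYvv0 : RY vY vY ≠ 0 := by
    rw [hRYe]
    have h1 : 0 < NY vY vY := by linarith
    show d⁻¹ * (NY vY vY * (pv (vY.val))⁻¹) ≠ 0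
    have h4 := hpv0 vY.val
    positivity
  -- range characterizations
  have hrangeX : ∀ i : {i : Fin n // i ∉ X}, i ≠ vX ↔ ∃ k, fXvX k = i := by
    intro i
    constructor
    · intro hi
      have hiv : i.val ≠ v := fun h => hi (Subtype.ext h)
      refine ⟨⟨i.val, ?_⟩, Subtype.ext rfl⟩
      intro hmem
      rcases Finset.mem_insert.mp hmem with h1 | h1
      · exact hiv h1
      · exact i.2 h1
    · rintro ⟨k, rfl⟩
      intro h
      have h2 : k.val = v := congrArg Subtype.val h
      exact k.2 (by rw [h2]; exact Finset.mem_insert_self v X)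
  have hrangeY : ∀ i : {i : Fin n // i ∉ Y}, i ≠ vY ↔ ∃ k, fYvY k = i := by
    intro i
    constructor
    · intro hi
      have hiv : i.val ≠ v := fun h => hi (Subtype.ext h)
      refine ⟨⟨i.val, ?_⟩, Subtype.ext rfl⟩
      intro hmem
      rcases Finset.mem_insert.mp hmem with h1 | h1
      · exact hiv h1
      · exact i.2 h1
    · rintro ⟨k, rfl⟩
      intro h
      have h2 : k.val = v := congrArg Subtype.val h
      exact k.2 (by rw [h2]; exact Finset.mem_insert_self v Y)
  have htdX := trace_delete (A.submatrix Subtype.val Subtype.val) RX hMX2 vX hRXvv0 hfXvX hrangeX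
  have htdY := trace_delete (A.submatrix Subtype.val Subtype.val) RY hMY2 vY hRYvv0 hfYvY hrangeY
  have hsubX : A.submatrix (Subtype.val : {i : Fin n // i ∉ insert v X} → Fin n) Subtype.val
      = (A.submatrix Subtype.val Subtype.val).submatrix fXvX fXvX := rfl
  have hsubY : A.submatrix (Subtype.val : {i : Fin n // i ∉ insert v Y} → Fin n) Subtype.val
      = (A.submatrix Subtype.val Subtype.val).submatrix fYvY fYvY := rfl
  rw [hsubX, hsubY, htdX, htdY, hIX.2, hIY.2]
  -- reduce to sums
  have hNX0 : ∀ a b, 0 ≤ NX a b := fun a b => good_inv_nonneg QX hGX a b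
  have hNY0 : ∀ a b, 0 ≤ NY a b := fun a b => good_inv_nonneg QY hGY a b
  set sX : {i : Fin n // i ∉ X} → ℝ :=
    fun i => NX i vX * NX vX i / (pv i.val * NX vX vX) with hsX
  set sY : {i : Fin n // i ∉ Y} → ℝ :=
    fun i => NY i vY * NY vY i / (pv i.val * NY vY vY) with hsY
  have hSXe : (∑ i, RX i vX * RX vX i) / RX vX vX = d⁻¹ * ∑ i, sX i := by
    rw [Finset.sum_div, Finset.mul_sum]
    refine Finset.sum_congr rfl fun i _ => ?_
    rw [hRXe, hRXe, hRXe, hsX]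
    have h1 := hpv0 v
    have h2 := hpv0 i.val
    show d⁻¹ * (NX i vX * (pv vX.val)⁻¹) * (d⁻¹ * (NX vX i * (pv i.val)⁻¹)) /
        (d⁻¹ * (NX vX vX * (pv vX.val)⁻¹))
      = d⁻¹ * (NX i vX * NX vX i / (pv i.val * NX vX vX))
    show d⁻¹ * (NX i vX * (pv v)⁻¹) * (d⁻¹ * (NX vX i * (pv i.val)⁻¹)) /
        (d⁻¹ * (NX vX vX * (pv v)⁻¹))
      = d⁻¹ * (NX i vX * NX vX i / (pv i.val * NX vX vX))
    field_simp
  have hSYe : (∑ i, RY i vY * RY vY i) / RY vY vY = d⁻¹ * ∑ i, sY i := by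
    rw [Finset.sum_div, Finset.mul_sum]
    refine Finset.sum_congr rfl fun i _ => ?_
    rw [hRYe, hRYe, hRYe, hsY]
    have h1 := hpv0 v
    have h2 := hpv0 i.val
    show d⁻¹ * (NY i vY * (pv v)⁻¹) * (d⁻¹ * (NY vY i * (pv i.val)⁻¹)) /
        (d⁻¹ * (NY vY vY * (pv v)⁻¹))
      = d⁻¹ * (NY i vY * NY vY i / (pv i.val * NY vY vY))
    field_simp
  -- comparison of N entries
  have hNle : ∀ (a b : {i : Fin n // i ∉ Y}), NY a b ≤ NX (fYX a) (fYX b) := by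
    intro a b
    exact good_inv_submatrix_le QX hGX hfYX a b
  -- hitting vectors
  set cX : {i : Fin n // i ∉ insert v X} → ℝ := fun l => P l.val v with hcX
  set GX : {i : Fin n // i ∉ insert v X} → ℝ := fun k => ((1 - QXv)⁻¹ *ᵥ cX) k with hGXdef
  set GY : {i : Fin n // i ∉ insert v Y} → ℝ :=
    fun k => ((1 - QXv.submatrix fYvXv fYvXv)⁻¹ *ᵥ (fun l => cX (fYvXv l))) k with hGYdef
  have hGle : ∀ k, GY k ≤ GX (fYvXv k) := fun k =>
    good_inv_mulVec_submatrix_le QXv hGXv hfYvXv cX (fun l => hP0 _ _) k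
  have hGY0 : ∀ k, 0 ≤ GY k := by
    intro k
    show 0 ≤ ∑ l, (1 - QXv.submatrix fYvXv fYvXv)⁻¹ k l * cX (fYvXv l)
    exact Finset.sum_nonneg fun l _ => mul_nonneg
      (good_inv_nonneg _ (good_submatrix QXv hGXv hfYvXv) k l) (hP0 _ _)
  have hGX0 : ∀ k, 0 ≤ GX k := by
    intro k
    show 0 ≤ ∑ l, (1 - QXv)⁻¹ k l * cX l
    exact Finset.sum_nonneg fun l _ => mul_nonneg (good_inv_nonneg _ hGXv k l) (hP0 _ _)
  have hcolY : ∀ k, NY (fYvY k) vY = GY k * NY vY vY := fun k =>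
    inv_col_eq QY hGY vY hfYvY hrangeY k
  have hcolX : ∀ k, NX (fXvX k) vX = GX k * NX vX vX := fun k =>
    inv_col_eq QX hGX vX hfXvX hrangeX k
  -- pointwise inequality
  have hpt : ∀ i : {i : Fin n // i ∉ Y}, sY i ≤ sX (fYX i) := by
    intro i
    by_cases hiv : i.val = v
    · have hieq : i = vY := Subtype.ext hiv
      subst hieq
      have e1 : sY vY = NY vY vY * (pv v)⁻¹ := by
        show NY vY vY * NY vY vY / (pv vY.val * NY vY vY) = _
        show NY vY vY * NY vY vY / (pv v * NY vY vY) = _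
        rw [mul_comm (pv v) (NY vY vY), ← div_div, mul_div_assoc, div_self hNYvv0,
          mul_one, div_eq_mul_inv]
      have e2 : sX (fYX vY) = NX vX vX * (pv v)⁻¹ := by
        show NX (fYX vY) vX * NX vX (fYX vY) / (pv (fYX vY).val * NX vX vX) = _
        show NX vX vX * NX vX vX / (pv v * NX vX vX) = _
        rw [mul_comm (pv v) (NX vX vX), ← div_div, mul_div_assoc, div_self hNXvv0,
          mul_one, div_eq_mul_inv]
      rw [e1, e2]
      exact mul_le_mul_of_nonneg_right (hNle vY vY) (inv_nonneg.mpr (hpv0 v).le)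
    · have hiY : i.val ∉ insert v Y := by
        intro hmem
        rcases Finset.mem_insert.mp hmem with h1 | h1
        · exact hiv h1
        · exact i.2 h1
      set k : {i : Fin n // i ∉ insert v Y} := ⟨i.val, hiY⟩ with hk
      have e1 : NY i vY = GY k * NY vY vY := hcolY k
      have e1X : NX (fYX i) vX = GX (fYvXv k) * NX vX vX := hcolX (fYvXv k)
      have e2 : sY i = GY k * NY vY i * (pv i.val)⁻¹ := by
        show NY i vY * NY vY i / (pv i.val * NY vY vY) = _
        rw [e1]
        have h2 := hpv0 i.val
        field_simp
      have e3 : sX (fYX i) = GX (fYvXv k) * NX vX (fYX i) * (pv i.val)⁻¹ := by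
        show NX (fYX i) vX * NX vX (fYX i) / (pv (fYX i).val * NX vX vX) = _
        rw [e1X]
        have h2 := hpv0 i.val
        show GX (fYvXv k) * NX vX vX * NX vX (fYX i) / (pv i.val * NX vX vX) = _
        field_simp
      rw [e2, e3]
      refine mul_le_mul_of_nonneg_right ?_ (inv_nonneg.mpr (hpv0 i.val).le)
      exact mul_le_mul (hGle k) (hNle vY i) (hNY0 vY i) (hGX0 (fYvXv k))
  have hsX0 : ∀ i, 0 ≤ sX i := by
    intro i
    show 0 ≤ NX i vX * NX vX i / (pv i.val * NX vX vX)
    have h1 := hpv0 i.val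
    have h2 : 0 < NX vX vX := by linarith
    exact div_nonneg (mul_nonneg (hNX0 _ _) (hNX0 _ _)) (by positivity)
  have hsum : ∑ i, sY i ≤ ∑ i, sX i :=
    le_trans (Finset.sum_le_sum fun i _ => hpt i) (sum_comp_inj_le hfYX sX hsX0)
  have key : (∑ i, RY i vY * RY vY i) / RY vY vY ≤ (∑ i, RX i vX * RX vX i) / RX vX vX := by
    rw [hSXe, hSYe]
    exact mul_le_mul_of_nonneg_left hsum (inv_nonneg.mpr hd.le)
  linarith
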